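/- It holds that lim_{n→∞} ‖Φ(b n) − Φ(0)‖_{ℓ²(Q,ℂ)} = 0, yet the sequence of Dirac probability measures (δ_{b n})_{n ∈ ℕ} does not converge weakly to δ_0 in the topology of weak convergence of Borel probability measures on X. (The final Claim in the proof of Proposition 6.5: the maximum mean distance d_k associated to the kernel k(x,y) = ⟪Φ(x), Φ(y)⟫ satisfies d_k(δ_{b n}, δ_0) → 0 without weak convergence, so d_k does not metrize the weak topology; this shows local compactness is necessary in Theorem 55 of [SGS16].) -/

import Mathlib

open MeasureTheory Filter

/-- Final claim in the proof of Proposition 6.5: `‖Φ(b n) − Φ(0)‖ → 0`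
(so the MMD of the Dirac measures `δ_{b n}` and `δ_0` tends to `0`), yet
`δ_{b n}` does not converge weakly to `δ_0`; hence the MMD of the kernel
`k(x,y) = ⟪Φ(x), Φ(y)⟫` does not metrize the weak topology. -/
theorem stmt_13 {X : Type*} [NormedAddCommGroup X] [InnerProductSpace ℝ X] [CompleteSpace X]
    [MeasurableSpace X] [BorelSpace X]
    (b : HilbertBasis ℕ ℝ X)
    (w : (ℕ →₀ ℚ) → ℝ) (hw1 : HasSum (fun q => w q ^ 2) 1)
    (hw : ∀ q, 0 < w q ∧ w q < 1)
    (Φ : X → lp (fun _ : ℕ →₀ ℚ => ℂ) 2)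
    (hΦ : ∀ (x : X) (q : ℕ →₀ ℚ), Φ x q = (w q : ℂ) *
      Complex.exp (Complex.I *
        ((inner ℝ (∑ n ∈ q.support, (q n : ℝ) • b n) x : ℝ) : ℂ))) :
    Filter.Tendsto (fun n : ℕ => ‖Φ (b n) - Φ 0‖) Filter.atTop (nhds 0) ∧
    ¬ Filter.Tendsto
        (fun n : ℕ => (⟨Measure.dirac (b n), inferInstance⟩ : ProbabilityMeasure X))
        Filter.atTop
        (@nhds (ProbabilityMeasure X) _ (⟨Measure.dirac 0, inferInstance⟩ : ProbabilityMeasure X)) := by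
  constructor
  · -- norm of each component of Φ x is w q
    have hnormΦ : ∀ (x : X) (q : ℕ →₀ ℚ), ‖Φ x q‖ = w q := by
      intro x q
      rw [hΦ]
      rw [norm_mul, Complex.norm_real, Complex.norm_exp]
      have : (Complex.I * ((inner ℝ (∑ n ∈ q.support, (q n : ℝ) • b n) x : ℝ) : ℂ)).re = 0 := by
        simp [Complex.mul_re]
      rw [this, Real.exp_zero, mul_one, Real.norm_eq_abs, abs_of_pos (hw q).1]
    -- component difference vanishes eventually
    have hcomp : ∀ (q : ℕ →₀ ℚ) (n : ℕ), n ∉ q.support → (Φ (b n) - Φ 0) q = 0 := by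
      intro q n hn
      have hs : ⇑(Φ (b n) - Φ 0) q = Φ (b n) q - Φ 0 q := by
        rw [lp.coeFn_sub]; rfl
      rw [hs, hΦ, hΦ]
      have h1 : (inner ℝ (∑ m ∈ q.support, (q m : ℝ) • b m) (b n) : ℝ) = 0 := by
        rw [sum_inner]
        refine Finset.sum_eq_zero fun m hm => ?_
        rw [real_inner_smul_left, b.orthonormal.2 (by rintro rfl; exact hn hm), mul_zero]
      have h2 : (inner ℝ (∑ m ∈ q.support, (q m : ℝ) • b m) (0 : X) : ℝ) = 0 := inner_zero_right _
      rw [h1, h2, sub_self]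
    -- squared norm tends to zero by dominated convergence
    have key : Tendsto (fun n : ℕ => ∑' q, ‖(Φ (b n) - Φ 0) q‖ ^ 2) atTop (nhds 0) := by
      have := tendsto_tsum_of_dominated_convergence
        (𝓕 := (atTop : Filter ℕ))
        (f := fun n q => ‖(Φ (b n) - Φ 0) q‖ ^ 2)
        (g := fun _ => (0 : ℝ)) (bound := fun q => 4 * w q ^ 2)
        ((hw1.summable).mul_left 4)
        (fun q => by
          have : ∀ᶠ n in atTop, ‖(Φ (b n) - Φ 0) q‖ ^ 2 = 0 := by
            have : ∀ᶠ n in atTop, n ∉ q.support := by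
              refine eventually_atTop.2 ⟨q.support.sup id + 1, fun n hn hmem => ?_⟩
              have := Finset.le_sup (f := id) hmem
              simp only [id_eq] at this
              omega
            filter_upwards [this] with n hn
            rw [hcomp q n hn, norm_zero]; ring
          exact Tendsto.congr' (this.mono fun n hn => hn.symm) tendsto_const_nhds)
        (Eventually.of_forall fun n => fun q => by
          show ‖‖(Φ (b n) - Φ 0) q‖ ^ 2‖ ≤ 4 * w q ^ 2
          have hb : ‖(Φ (b n) - Φ 0) q‖ ≤ 2 * w q := by
            have hs : ⇑(Φ (b n) - Φ 0) q = Φ (b n) q - Φ 0 q := by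
              rw [lp.coeFn_sub]; rfl
            rw [hs]
            calc ‖Φ (b n) q - Φ 0 q‖ ≤ ‖Φ (b n) q‖ + ‖Φ 0 q‖ := norm_sub_le _ _
              _ = 2 * w q := by rw [hnormΦ, hnormΦ]; ring
          have h0 : (0:ℝ) ≤ ‖(Φ (b n) - Φ 0) q‖ := norm_nonneg _
          rw [Real.norm_eq_abs, abs_of_nonneg (by positivity)]
          have hm := mul_self_le_mul_self h0 hb
          nlinarith [hm, (hw q).1])
      simpa using this
    -- convert `tsum` of squares to the lp norm
    have hnorm : ∀ n : ℕ, ‖Φ (b n) - Φ 0‖ ^ 2 = ∑' q, ‖(Φ (b n) - Φ 0) q‖ ^ 2 := by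
      intro n
      have hp : (0:ℝ) < (2 : ENNReal).toReal := by norm_num
      have := lp.norm_rpow_eq_tsum hp (Φ (b n) - Φ 0)
      have h2 : (2 : ENNReal).toReal = (2:ℝ) := by norm_num
      rw [h2] at this
      calc ‖Φ (b n) - Φ 0‖ ^ 2 = ‖Φ (b n) - Φ 0‖ ^ (2:ℝ) := by
            rw [← Real.rpow_natCast]; norm_num
        _ = ∑' q, ‖(Φ (b n) - Φ 0) q‖ ^ (2:ℝ) := this
        _ = ∑' q, ‖(Φ (b n) - Φ 0) q‖ ^ 2 := by
            congr 1; funext q; rw [← Real.rpow_natCast]; norm_num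
    have key2 : Tendsto (fun n : ℕ => ‖Φ (b n) - Φ 0‖ ^ 2) atTop (nhds 0) := by
      simpa [hnorm] using key
    have := (Real.continuous_sqrt.tendsto 0).comp key2
    simp only [Real.sqrt_zero, Function.comp_def] at this
    refine this.congr fun n => ?_
    rw [Real.sqrt_sq (norm_nonneg _)]
  · intro h
    replace h := (ProbabilityMeasure.tendsto_iff_forall_integral_tendsto
      (μs := fun n : ℕ => (⟨Measure.dirac (b n), inferInstance⟩ : ProbabilityMeasure X))
      (μ := (⟨Measure.dirac 0, inferInstance⟩ : ProbabilityMeasure X))).1 h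
    have hb1 : ∀ n, ‖b n‖ = 1 := b.orthonormal.1
    let f : BoundedContinuousFunction X ℝ := BoundedContinuousFunction.mkOfBound
      ⟨fun x => min ‖x‖ 1, by fun_prop⟩ 2 (fun x y => by
        have h1 := min_le_right ‖x‖ 1
        have h2 : 0 ≤ min ‖x‖ 1 := le_min (norm_nonneg _) zero_le_one
        have h3 := min_le_right ‖y‖ 1
        have h4 : 0 ≤ min ‖y‖ 1 := le_min (norm_nonneg _) zero_le_one
        show dist (min ‖x‖ 1) (min ‖y‖ 1) ≤ 2
        rw [Real.dist_eq, abs_le]; constructor <;> linarith)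
    have h' : Tendsto (fun n => f (b n)) atTop (nhds (f 0)) := by
      simpa [integral_dirac] using h f
    have h'' : Tendsto (fun _ : ℕ => (1:ℝ)) atTop (nhds 0) := by
      simpa [f, hb1] using h'
    exact one_ne_zero (tendsto_nhds_unique tendsto_const_nhds h'')
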